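/- There is no positive semidefinite operator H on ℂ²⊗ℂ² and bijection f : [0,‖H‖] → [0,1] such that for all pairs of qubit density matrices ρ₁, ρ₂, D(ρ₁,ρ₂) = f(min over couplings ρ₁₂ of ρ₁ and ρ₂ of Tr(H ρ₁₂)), where the minimum is over all density operators ρ₁₂ on ℂ²⊗ℂ² with Tr₂(ρ₁₂) = ρ₁ and Tr₁(ρ₁₂) = ρ₂, and D is the trace distance. (No-go quantum Kantorovich–Rubinstein theorem.) -/

import Mathlib

open scoped Matrix Kronecker ComplexOrder

noncomputable section

namespace QEMD

variable {m n : Type*} [Fintype m] [Fintype n] [DecidableEq m] [DecidableEq n]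

/-- Total square root: the PSD square root if `A` is PSD, else `0`. -/
def msqrt (A : Matrix n n ℂ) : Matrix n n ℂ :=
  letI := Classical.dec A.PosSemidef
  if h : A.PosSemidef then
    (h.1.eigenvectorUnitary : Matrix n n ℂ) *
      Matrix.diagonal ((↑) ∘ (Real.sqrt ∘ h.1.eigenvalues)) *
      (star h.1.eigenvectorUnitary : Matrix n n ℂ) else 0

/-- Trace norm `‖A‖₁ = Tr √(AᴴA)`. -/
def traceNorm (A : Matrix n n ℂ) : ℝ :=
  ((msqrt (Aᴴ * A)).trace).re

/-- Trace distance `D(ρ,σ) = ½‖ρ-σ‖₁`. -/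
def traceDist (ρ σ : Matrix n n ℂ) : ℝ := traceNorm (ρ - σ) / 2

/-- Fidelity `F(ρ,σ) = Tr √(√ρ σ √ρ)`. -/
def fidelity (ρ σ : Matrix n n ℂ) : ℝ :=
  ((msqrt (msqrt ρ * σ * msqrt ρ)).trace).re

/-- Density matrix predicate. -/
def IsDensity (ρ : Matrix n n ℂ) : Prop := ρ.PosSemidef ∧ ρ.trace = 1

/-- Projector `|v⟩⟨v|` onto a vector. -/
def proj (v : n → ℂ) : Matrix n n ℂ := Matrix.of fun i j => v i * star (v j)

/-- Partial trace over the first (left) factor. -/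
def traceLeft (ρ : Matrix (m × n) (m × n) ℂ) : Matrix n n ℂ :=
  Matrix.of fun i j => ∑ k, ρ (k, i) (k, j)

/-- Partial trace over the second (right) factor. -/
def traceRight (ρ : Matrix (m × n) (m × n) ℂ) : Matrix m m ℂ :=
  Matrix.of fun i j => ∑ k, ρ (i, k) (j, k)

/-- The swap operator `S|αβ⟩ = |βα⟩` on `ℂ^d ⊗ ℂ^d`. -/
def swap (d : ℕ) : Matrix (Fin d × Fin d) (Fin d × Fin d) ℂ :=
  Matrix.of fun p q => if p.1 = q.2 ∧ p.2 = q.1 then 1 else 0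

/-- Projection onto the symmetric subspace, `P_s = (I + S)/2`. -/
def Psym (d : ℕ) : Matrix (Fin d × Fin d) (Fin d × Fin d) ℂ := (2:ℂ)⁻¹ • (1 + swap d)

/-- Projection onto the antisymmetric subspace, `P_as = (I - S)/2`. -/
def Pasym (d : ℕ) : Matrix (Fin d × Fin d) (Fin d × Fin d) ℂ := (2:ℂ)⁻¹ • (1 - swap d)

/-- `ρAB` is a quantum coupling of `ρA` and `ρB`. -/
def IsCoupling (ρAB : Matrix (m × n) (m × n) ℂ) (ρA : Matrix m m ℂ)
    (ρB : Matrix n n ℂ) : Prop :=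
  IsDensity ρAB ∧ traceRight ρAB = ρA ∧ traceLeft ρAB = ρB

/-- The maximally entangled vector `|Φ⟩ = (1/√d) ∑ᵢ |i⟩|i⟩`. -/
def maxEnt (d : ℕ) : Fin d × Fin d → ℂ :=
  fun p => if p.1 = p.2 then ((1 / Real.sqrt d : ℝ) : ℂ) else 0


set_option linter.unusedSectionVars false
set_option maxHeartbeats 1000000

/-- kron of vectors -/
def kv (v w : Fin 2 → ℂ) : Fin 2 × Fin 2 → ℂ := fun p => v p.1 * w p.2

lemma proj_posSemidef (v : n → ℂ) : (proj v).PosSemidef := by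
  refine Matrix.PosSemidef.of_dotProduct_mulVec_nonneg ?_ ?_
  · ext i j
    simp [proj, Matrix.conjTranspose_apply, mul_comm]
  · intro x
    have : star x ⬝ᵥ (proj v) *ᵥ x = star (star v ⬝ᵥ x) * (star v ⬝ᵥ x) := by
      simp only [dotProduct, Matrix.mulVec, proj, Matrix.of_apply, Pi.star_apply,
        star_sum, star_mul', star_star, Finset.mul_sum, Finset.sum_mul]
      rw [Finset.sum_comm]
      refine Finset.sum_congr rfl fun i _ => Finset.sum_congr rfl fun j _ => ?_
      ring
    rw [this]
    exact star_mul_self_nonneg _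

lemma proj_trace (v : n → ℂ) : (proj v).trace = star v ⬝ᵥ v := by
  simp [Matrix.trace, proj, Matrix.diag, dotProduct, mul_comm]

lemma kv_unit {v w : Fin 2 → ℂ} (hv : star v ⬝ᵥ v = 1) (hw : star w ⬝ᵥ w = 1) :
    star (kv v w) ⬝ᵥ (kv v w) = 1 := by
  have : star (kv v w) ⬝ᵥ (kv v w) = (star v ⬝ᵥ v) * (star w ⬝ᵥ w) := by
    simp only [dotProduct, kv, Pi.star_apply, star_mul', Fintype.sum_prod_type,
      Finset.mul_sum, Finset.sum_mul]
    rw [Finset.sum_comm]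
    refine Finset.sum_congr rfl fun i _ => Finset.sum_congr rfl fun j _ => ?_
    ring
  rw [this, hv, hw, one_mul]

lemma proj_kv_isDensity {v w : Fin 2 → ℂ} (hv : star v ⬝ᵥ v = 1) (hw : star w ⬝ᵥ w = 1) :
    IsDensity (proj (kv v w)) :=
  ⟨proj_posSemidef _, by rw [proj_trace, kv_unit hv hw]⟩

lemma coupling_proj_kv {v w : Fin 2 → ℂ} (hv : star v ⬝ᵥ v = 1) (hw : star w ⬝ᵥ w = 1) :
    IsCoupling (proj (kv v w)) (proj v) (proj w) := by
  have hv' : ∑ k, v k * star (v k) = 1 := by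
    rw [← hv]; simp [dotProduct, mul_comm]
  have hw' : ∑ k, w k * star (w k) = 1 := by
    rw [← hw]; simp [dotProduct, mul_comm]
  refine ⟨proj_kv_isDensity hv hw, ?_, ?_⟩
  · ext i j
    simp only [traceRight, proj, kv, Matrix.of_apply, star_mul']
    have : ∀ k : Fin 2, v i * w k * (star (v j) * star (w k))
        = (v i * star (v j)) * (w k * star (w k)) := fun k => by ring
    simp only [this, ← Finset.mul_sum, hw', mul_one]
  · ext i j
    simp only [traceLeft, proj, kv, Matrix.of_apply, star_mul']
    have : ∀ k : Fin 2, v k * w i * (star (v k) * star (w j))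
        = (w i * star (w j)) * (v k * star (v k)) := fun k => by ring
    simp only [this, ← Finset.mul_sum, hv', mul_one]

def vperp (v : Fin 2 → ℂ) : Fin 2 → ℂ := ![-(star (v 1)), star (v 0)]

lemma proj_mulVec (v x : n → ℂ) : proj v *ᵥ x = (star v ⬝ᵥ x) • v := by
  ext i
  simp only [Matrix.mulVec, proj, dotProduct, Matrix.of_apply, Pi.smul_apply,
    Pi.star_apply, smul_eq_mul, Finset.sum_mul, Finset.mul_sum]
  refine Finset.sum_congr rfl fun j _ => by ring

lemma star_dot_vperp (v : Fin 2 → ℂ) : star v ⬝ᵥ vperp v = 0 := by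
  simp [dotProduct, Fin.sum_univ_two, vperp]
  ring

lemma comp_perp {v : Fin 2 → ℂ} (hv : star v ⬝ᵥ v = 1) : proj v + proj (vperp v) = 1 := by
  have hv' : (starRingEnd ℂ) (v 0) * v 0 + (starRingEnd ℂ) (v 1) * v 1 = 1 := by
    simpa [dotProduct, Fin.sum_univ_two, RCLike.star_def] using hv
  ext i j
  fin_cases i <;> fin_cases j
  · simp [proj, vperp, Matrix.one_apply, RCLike.star_def]
    linear_combination hv'
  · simp [proj, vperp, Matrix.one_apply, RCLike.star_def]
    ring
  · simp [proj, vperp, Matrix.one_apply, RCLike.star_def]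
    ring
  · simp [proj, vperp, Matrix.one_apply, RCLike.star_def]
    linear_combination hv'

lemma proj_kv_eq_kron (a b : Fin 2 → ℂ) : proj (kv a b) = proj a ⊗ₖ proj b := by
  ext ⟨i, j⟩ ⟨k, l⟩
  simp [proj, kv, Matrix.kroneckerMap_apply]
  ring

lemma conj_comp {w wp : Fin 2 → ℂ} (hc : proj w + proj wp = 1) (j l : Fin 2) :
    (starRingEnd ℂ) (w j) * w l + (starRingEnd ℂ) (wp j) * wp l
      = if j = l then 1 else 0 := by
  have h : (proj w + proj wp) l j = (1 : Matrix (Fin 2) (Fin 2) ℂ) l j := by rw [hc]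
  have h2 : w l * (starRingEnd ℂ) (w j) + wp l * (starRingEnd ℂ) (wp j)
      = if l = j then 1 else 0 := by
    simpa [proj, Matrix.one_apply, RCLike.star_def] using h
  rw [show ((if j = l then 1 else 0 : ℂ)) = if l = j then 1 else 0 by
    by_cases h : j = l <;> simp [h, eq_comm]  ]
  linear_combination h2

lemma quad_sum_right (ρ : Matrix (Fin 2 × Fin 2) (Fin 2 × Fin 2) ℂ) (a : Fin 2 → ℂ)
    {w wp : Fin 2 → ℂ} (hc : proj w + proj wp = 1) :
    star (kv a w) ⬝ᵥ ρ *ᵥ kv a w + star (kv a wp) ⬝ᵥ ρ *ᵥ kv a wp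
      = star a ⬝ᵥ (traceRight ρ) *ᵥ a := by
  have k00 := conj_comp hc 0 0
  have k01 := conj_comp hc 0 1
  have k10 := conj_comp hc 1 0
  have k11 := conj_comp hc 1 1
  simp only [if_true, if_false, Fin.zero_eq_one_iff, Fin.one_eq_zero_iff, eq_self_iff_true,
    Nat.succ_ne_self, if_neg, OfNat.ofNat_ne_one, ite_true, ite_false] at k00 k01 k10 k11
  simp only [dotProduct, Matrix.mulVec, traceRight, kv, Matrix.of_apply, Pi.star_apply,
    star_mul', RCLike.star_def, Fintype.sum_prod_type, Fin.sum_univ_two, Finset.mul_sum,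
    Finset.sum_mul]
  linear_combination
    ((starRingEnd ℂ) (a 0) * a 0 * ρ (0,0) (0,0) + (starRingEnd ℂ) (a 0) * a 1 * ρ (0,0) (1,0)
      + (starRingEnd ℂ) (a 1) * a 0 * ρ (1,0) (0,0) + (starRingEnd ℂ) (a 1) * a 1 * ρ (1,0) (1,0)) * k00
    + ((starRingEnd ℂ) (a 0) * a 0 * ρ (0,0) (0,1) + (starRingEnd ℂ) (a 0) * a 1 * ρ (0,0) (1,1)
      + (starRingEnd ℂ) (a 1) * a 0 * ρ (1,0) (0,1) + (starRingEnd ℂ) (a 1) * a 1 * ρ (1,0) (1,1)) * k01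
    + ((starRingEnd ℂ) (a 0) * a 0 * ρ (0,1) (0,0) + (starRingEnd ℂ) (a 0) * a 1 * ρ (0,1) (1,0)
      + (starRingEnd ℂ) (a 1) * a 0 * ρ (1,1) (0,0) + (starRingEnd ℂ) (a 1) * a 1 * ρ (1,1) (1,0)) * k10
    + ((starRingEnd ℂ) (a 0) * a 0 * ρ (0,1) (0,1) + (starRingEnd ℂ) (a 0) * a 1 * ρ (0,1) (1,1)
      + (starRingEnd ℂ) (a 1) * a 0 * ρ (1,1) (0,1) + (starRingEnd ℂ) (a 1) * a 1 * ρ (1,1) (1,1)) * k11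

lemma quad_sum_left (ρ : Matrix (Fin 2 × Fin 2) (Fin 2 × Fin 2) ℂ) (a : Fin 2 → ℂ)
    {v vp : Fin 2 → ℂ} (hc : proj v + proj vp = 1) :
    star (kv v a) ⬝ᵥ ρ *ᵥ kv v a + star (kv vp a) ⬝ᵥ ρ *ᵥ kv vp a
      = star a ⬝ᵥ (traceLeft ρ) *ᵥ a := by
  have k00 := conj_comp hc 0 0
  have k01 := conj_comp hc 0 1
  have k10 := conj_comp hc 1 0
  have k11 := conj_comp hc 1 1
  simp only [if_true, if_false, Fin.zero_eq_one_iff, Fin.one_eq_zero_iff, eq_self_iff_true,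
    Nat.succ_ne_self, if_neg, OfNat.ofNat_ne_one, ite_true, ite_false] at k00 k01 k10 k11
  simp only [dotProduct, Matrix.mulVec, traceLeft, kv, Matrix.of_apply, Pi.star_apply,
    star_mul', RCLike.star_def, Fintype.sum_prod_type, Fin.sum_univ_two, Finset.mul_sum,
    Finset.sum_mul]
  linear_combination
    ((starRingEnd ℂ) (a 0) * a 0 * ρ (0,0) (0,0) + (starRingEnd ℂ) (a 0) * a 1 * ρ (0,0) (0,1)
      + (starRingEnd ℂ) (a 1) * a 0 * ρ (0,1) (0,0) + (starRingEnd ℂ) (a 1) * a 1 * ρ (0,1) (0,1)) * k00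
    + ((starRingEnd ℂ) (a 0) * a 0 * ρ (0,0) (1,0) + (starRingEnd ℂ) (a 0) * a 1 * ρ (0,0) (1,1)
      + (starRingEnd ℂ) (a 1) * a 0 * ρ (0,1) (1,0) + (starRingEnd ℂ) (a 1) * a 1 * ρ (0,1) (1,1)) * k01
    + ((starRingEnd ℂ) (a 0) * a 0 * ρ (1,0) (0,0) + (starRingEnd ℂ) (a 0) * a 1 * ρ (1,0) (0,1)
      + (starRingEnd ℂ) (a 1) * a 0 * ρ (1,1) (0,0) + (starRingEnd ℂ) (a 1) * a 1 * ρ (1,1) (0,1)) * k10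
    + ((starRingEnd ℂ) (a 0) * a 0 * ρ (1,0) (1,0) + (starRingEnd ℂ) (a 0) * a 1 * ρ (1,0) (1,1)
      + (starRingEnd ℂ) (a 1) * a 0 * ρ (1,1) (1,0) + (starRingEnd ℂ) (a 1) * a 1 * ρ (1,1) (1,1)) * k11

lemma proj_mul_proj (u : n → ℂ) (ρ : Matrix n n ℂ) :
    proj u * ρ * proj u = (star u ⬝ᵥ ρ *ᵥ u) • proj u := by
  ext p q
  simp only [Matrix.mul_apply, Matrix.smul_apply, proj, Matrix.of_apply, dotProduct,
    Matrix.mulVec, Pi.star_apply, smul_eq_mul, Finset.sum_mul, Finset.mul_sum]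
  rw [Finset.sum_comm]
  refine Finset.sum_congr rfl fun s _ => Finset.sum_congr rfl fun r _ => by ring

lemma mul_proj_zero {ρ : Matrix n n ℂ} {y : n → ℂ} (h : ρ *ᵥ y = 0) : ρ * proj y = 0 := by
  ext p q
  have hp : ∑ r, ρ p r * y r = 0 := by
    simpa [Matrix.mulVec, dotProduct] using congr_fun h p
  have e : ∀ r, ρ p r * (y r * star (y q)) = (ρ p r * y r) * star (y q) := fun r => by ring
  simp only [Matrix.mul_apply, proj, Matrix.of_apply, Matrix.zero_apply, e, ← Finset.sum_mul, hp,
    zero_mul]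

lemma add_eq_zero_left {x y : ℂ} (hx : 0 ≤ x) (hy : 0 ≤ y) (h : x + y = 0) : x = 0 :=
  le_antisymm (h ▸ le_add_of_nonneg_right hy) hx

lemma coupling_unique {v w : Fin 2 → ℂ} (hv : star v ⬝ᵥ v = 1) (hw : star w ⬝ᵥ w = 1)
    {ρ : Matrix (Fin 2 × Fin 2) (Fin 2 × Fin 2) ℂ}
    (h : IsCoupling ρ (proj v) (proj w)) : ρ = proj (kv v w) := by
  obtain ⟨⟨hpsd, htr⟩, hR, hL⟩ := h
  have hcv := comp_perp hv
  have hcw := comp_perp hw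
  -- the three "perp" product vectors are killed by ρ
  have hz2 : star (kv (vperp v) w) ⬝ᵥ ρ *ᵥ kv (vperp v) w
      + star (kv (vperp v) (vperp w)) ⬝ᵥ ρ *ᵥ kv (vperp v) (vperp w) = 0 := by
    rw [quad_sum_right ρ (vperp v) hcw, hR, proj_mulVec, star_dot_vperp, zero_smul,
      dotProduct_zero]
  have hz1 : star (kv v (vperp w)) ⬝ᵥ ρ *ᵥ kv v (vperp w)
      + star (kv (vperp v) (vperp w)) ⬝ᵥ ρ *ᵥ kv (vperp v) (vperp w) = 0 := by
    rw [quad_sum_left ρ (vperp w) hcv, hL, proj_mulVec, star_dot_vperp, zero_smul,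
      dotProduct_zero]
  have k2 : ρ *ᵥ kv (vperp v) w = 0 :=
    (hpsd.dotProduct_mulVec_zero_iff _).1 <|
      add_eq_zero_left (hpsd.dotProduct_mulVec_nonneg _) (hpsd.dotProduct_mulVec_nonneg _) hz2
  have k3 : ρ *ᵥ kv (vperp v) (vperp w) = 0 := by
    refine (hpsd.dotProduct_mulVec_zero_iff _).1 ?_
    have := add_eq_zero_left (hpsd.dotProduct_mulVec_nonneg _) (hpsd.dotProduct_mulVec_nonneg _)
      (by rw [add_comm] at hz2; exact hz2)
    exact this
  have k1 : ρ *ᵥ kv v (vperp w) = 0 :=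
    (hpsd.dotProduct_mulVec_zero_iff _).1 <|
      add_eq_zero_left (hpsd.dotProduct_mulVec_nonneg _) (hpsd.dotProduct_mulVec_nonneg _) hz1
  -- completeness of the product basis
  have hC : proj (kv v w) + proj (kv v (vperp w)) + proj (kv (vperp v) w)
      + proj (kv (vperp v) (vperp w)) = 1 := by
    rw [proj_kv_eq_kron, proj_kv_eq_kron, proj_kv_eq_kron, proj_kv_eq_kron,
      ← Matrix.kronecker_add, add_assoc, ← Matrix.kronecker_add, hcw,
      ← Matrix.add_kronecker, hcv, Matrix.one_kronecker_one]
  have e1 : ρ = ρ * proj (kv v w) := by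
    have : ρ * (proj (kv v w) + proj (kv v (vperp w)) + proj (kv (vperp v) w)
        + proj (kv (vperp v) (vperp w))) = ρ * 1 := by rw [hC]
    rw [mul_add, mul_add, mul_add, mul_proj_zero k1, mul_proj_zero k2, mul_proj_zero k3,
      add_zero, add_zero, add_zero, mul_one] at this
    exact this.symm
  have e2 : ρ = proj (kv v w) * ρ := by
    have := congrArg Matrix.conjTranspose e1
    rwa [Matrix.conjTranspose_mul, hpsd.1.eq, (proj_posSemidef (kv v w)).1.eq] at this
  have e3 : ρ = (star (kv v w) ⬝ᵥ ρ *ᵥ kv v w) • proj (kv v w) := by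
    calc ρ = proj (kv v w) * ρ := e2
    _ = proj (kv v w) * (ρ * proj (kv v w)) := by rw [← e1]
    _ = proj (kv v w) * ρ * proj (kv v w) := by rw [Matrix.mul_assoc]
    _ = _ := proj_mul_proj _ _
  have hc1 : star (kv v w) ⬝ᵥ ρ *ᵥ kv v w = 1 := by
    have := congrArg Matrix.trace e3
    rw [htr, Matrix.trace_smul, proj_trace, kv_unit hv hw, smul_eq_mul, mul_one] at this
    exact this.symm
  rw [e3, hc1, one_smul]

lemma trace_mul_proj (H : Matrix n n ℂ) (u : n → ℂ) :
    (H * proj u).trace = star u ⬝ᵥ H *ᵥ u := by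
  simp only [Matrix.trace, Matrix.diag, Matrix.mul_apply, proj, Matrix.of_apply,
    dotProduct, Matrix.mulVec, Pi.star_apply, Finset.mul_sum]
  refine Finset.sum_congr rfl fun p _ => Finset.sum_congr rfl fun q _ => by ring

lemma sInf_coupling (H : Matrix (Fin 2 × Fin 2) (Fin 2 × Fin 2) ℂ) {v w : Fin 2 → ℂ}
    (hv : star v ⬝ᵥ v = 1) (hw : star w ⬝ᵥ w = 1) :
    sInf {x : ℝ | ∃ ρ12 : Matrix ((Fin 2) × (Fin 2)) ((Fin 2) × (Fin 2)) ℂ,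
        IsCoupling ρ12 (proj v) (proj w) ∧ x = ((H * ρ12).trace).re}
      = (star (kv v w) ⬝ᵥ H *ᵥ kv v w).re := by
  have hs : {x : ℝ | ∃ ρ12 : Matrix ((Fin 2) × (Fin 2)) ((Fin 2) × (Fin 2)) ℂ,
      IsCoupling ρ12 (proj v) (proj w) ∧ x = ((H * ρ12).trace).re}
      = {(star (kv v w) ⬝ᵥ H *ᵥ kv v w).re} := by
    ext x
    simp only [Set.mem_setOf_eq, Set.mem_singleton_iff]
    constructor
    · rintro ⟨ρ12, hc, rfl⟩
      rw [coupling_unique hv hw hc, trace_mul_proj]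
    · rintro rfl
      exact ⟨proj (kv v w), coupling_proj_kv hv hw, by rw [trace_mul_proj]⟩
  rw [hs, csInf_singleton]

lemma q_nonneg {H : Matrix (Fin 2 × Fin 2) (Fin 2 × Fin 2) ℂ} (hH : H.PosSemidef)
    (u : Fin 2 × Fin 2 → ℂ) : 0 ≤ (star u ⬝ᵥ H *ᵥ u).re :=
  hH.re_dotProduct_nonneg u

open scoped Matrix.Norms.L2Operator in
lemma q_le_norm (H : Matrix (Fin 2 × Fin 2) (Fin 2 × Fin 2) ℂ) {u : Fin 2 × Fin 2 → ℂ}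
    (hu : star u ⬝ᵥ u = 1) : (star u ⬝ᵥ H *ᵥ u).re ≤ ‖H‖ := by
  set u' : EuclideanSpace ℂ (Fin 2 × Fin 2) := (WithLp.equiv 2 _).symm u with hu'
  have hsum : ∑ i, ‖u i‖ ^ 2 = 1 := by
    have h1 : (star u ⬝ᵥ u) = ((∑ i, ‖u i‖ ^ 2 : ℝ) : ℂ) := by
      simp only [dotProduct, Pi.star_apply, RCLike.star_def, RCLike.conj_mul]
      push_cast
      rfl
    rw [h1] at hu
    exact_mod_cast hu
  have hnorm : ‖u'‖ = 1 := by
    rw [EuclideanSpace.norm_eq]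
    exact Real.sqrt_eq_one.2 hsum
  set z : EuclideanSpace ℂ (Fin 2 × Fin 2) := (EuclideanSpace.equiv (Fin 2 × Fin 2) ℂ).symm (H *ᵥ u) with hz
  have hinner : (inner ℂ u' z : ℂ) = star u ⬝ᵥ H *ᵥ u := by
    simp only [PiLp.inner_apply, RCLike.inner_apply, dotProduct, Pi.star_apply,
      RCLike.star_def]
    exact Finset.sum_congr rfl fun i _ => mul_comm _ _
  have hCS : ‖(inner ℂ u' z : ℂ)‖ ≤ ‖u'‖ * ‖z‖ := norm_inner_le_norm u' z
  have hbound : ‖z‖ ≤ ‖H‖ * ‖u'‖ := H.l2_opNorm_mulVec u'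
  calc (star u ⬝ᵥ H *ᵥ u).re = RCLike.re (inner ℂ u' z : ℂ) := by rw [hinner]; rfl
  _ ≤ ‖(inner ℂ u' z : ℂ)‖ := RCLike.re_le_norm _
  _ ≤ ‖u'‖ * ‖z‖ := hCS
  _ ≤ ‖u'‖ * (‖H‖ * ‖u'‖) := by
      exact mul_le_mul_of_nonneg_left hbound (norm_nonneg _)
  _ = ‖H‖ := by rw [hnorm]; ring

lemma smul_one_psd {α : ℝ} (hα : 0 ≤ α) :
    ((α : ℂ) • (1 : Matrix (Fin 2) (Fin 2) ℂ)).PosSemidef := by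
  refine Matrix.PosSemidef.of_dotProduct_mulVec_nonneg ?_ ?_
  · ext i j
    fin_cases i <;> fin_cases j <;>
      simp [Matrix.conjTranspose_apply, Matrix.one_apply, Complex.conj_ofReal]
  · intro x
    have : star x ⬝ᵥ ((α : ℂ) • (1 : Matrix (Fin 2) (Fin 2) ℂ)) *ᵥ x
        = (α : ℂ) * (star x ⬝ᵥ x) := by
      rw [Matrix.smul_mulVec, Matrix.one_mulVec, dotProduct_smul, smul_eq_mul]
    rw [this]
    exact mul_nonneg (by exact_mod_cast Complex.zero_le_real.2 hα)
      (dotProduct_star_self_nonneg x)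

lemma msqrt_smul_one {α : ℝ} (hα : 0 ≤ α) :
    msqrt ((α : ℂ) • (1 : Matrix (Fin 2) (Fin 2) ℂ))
      = ((Real.sqrt α : ℝ) : ℂ) • 1 := by
  have hpsd := smul_one_psd hα
  have hpsd2 := smul_one_psd (Real.sqrt_nonneg α)
  have hsq : (((Real.sqrt α : ℝ) : ℂ) • (1 : Matrix (Fin 2) (Fin 2) ℂ)) ^ 2
      = (α : ℂ) • 1 := by
    rw [smul_pow, one_pow]
    congr 1
    rw [← Complex.ofReal_pow, Real.sq_sqrt hα]
  unfold msqrt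
  rw [dif_pos hpsd]
  have hA : ((α:ℂ) • (1 : Matrix (Fin 2) (Fin 2) ℂ)) = algebraMap ℝ _ α := by
    rw [Algebra.algebraMap_eq_smul_one, Complex.coe_smul]
  have h2 : cfc Real.sqrt ((α:ℂ) • (1 : Matrix (Fin 2) (Fin 2) ℂ)) = ((Real.sqrt α : ℝ) : ℂ) • 1 := by
    rw [hA, cfc_algebraMap, Algebra.algebraMap_eq_smul_one, Complex.coe_smul]
  rw [← h2, hpsd.1.cfc_eq Real.sqrt]
  rfl

lemma traceDist_proj {v w : Fin 2 → ℂ} (hv : star v ⬝ᵥ v = 1) (hw : star w ⬝ᵥ w = 1) :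
    traceDist (proj v) (proj w)
      = Real.sqrt (Complex.normSq (v 0 * w 1 - v 1 * w 0)) := by
  have hv' : (starRingEnd ℂ) (v 0) * v 0 + (starRingEnd ℂ) (v 1) * v 1 = 1 := by
    simpa [dotProduct, Fin.sum_univ_two, RCLike.star_def] using hv
  have hw' : (starRingEnd ℂ) (w 0) * w 0 + (starRingEnd ℂ) (w 1) * w 1 = 1 := by
    simpa [dotProduct, Fin.sum_univ_two, RCLike.star_def] using hw
  set δ := v 0 * w 1 - v 1 * w 0 with hδdef
  have hδ : ((Complex.normSq δ : ℝ) : ℂ) = δ * (starRingEnd ℂ) δ := (Complex.mul_conj δ).symm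
  have hM : (proj v - proj w)ᴴ * (proj v - proj w)
      = ((Complex.normSq δ : ℝ) : ℂ) • 1 := by
    ext i j
    fin_cases i <;> fin_cases j <;>
      simp only [Matrix.mul_apply, Matrix.sub_apply, Matrix.conjTranspose_apply,
        Matrix.smul_apply, Matrix.one_apply, proj, Matrix.of_apply, Fin.sum_univ_two,
        RCLike.star_def, map_sub, map_mul, RingHom.map_one, Complex.conj_conj, hδ, ← Complex.mul_conj,
        smul_eq_mul, if_true, if_false, Fin.isValue, mul_one, mul_zero, hδdef, map_sub,
        Fin.mk_zero, Fin.mk_one, Fin.zero_eq_one_iff, Fin.one_eq_zero_iff, Nat.succ_ne_self,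
        ite_false, ite_true, OfNat.ofNat_ne_one, OfNat.one_ne_ofNat] <;>
    first
      | (linear_combination (v 0 * (starRingEnd ℂ) (v 0) - w 0 * (starRingEnd ℂ) (w 0)) * hv'
          - (v 0 * (starRingEnd ℂ) (v 0) - w 0 * (starRingEnd ℂ) (w 0)) * hw')
      | (linear_combination (v 0 * (starRingEnd ℂ) (v 1) - w 0 * (starRingEnd ℂ) (w 1)) * hv'
          - (v 0 * (starRingEnd ℂ) (v 1) - w 0 * (starRingEnd ℂ) (w 1)) * hw')
      | (linear_combination (v 1 * (starRingEnd ℂ) (v 0) - w 1 * (starRingEnd ℂ) (w 0)) * hv'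
          - (v 1 * (starRingEnd ℂ) (v 0) - w 1 * (starRingEnd ℂ) (w 0)) * hw')
      | (linear_combination (v 1 * (starRingEnd ℂ) (v 1) - w 1 * (starRingEnd ℂ) (w 1)) * hv'
          - (v 1 * (starRingEnd ℂ) (v 1) - w 1 * (starRingEnd ℂ) (w 1)) * hw')
  unfold traceDist traceNorm
  rw [hM, msqrt_smul_one (Complex.normSq_nonneg δ), Matrix.trace_smul, Matrix.trace_one]
  simp [smul_eq_mul, Complex.ofReal_re]

lemma nonneg_re_zero {z : ℂ} (hz : 0 ≤ z) (h : z.re = 0) : z = 0 := by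
  rw [Complex.nonneg_iff] at hz
  exact Complex.ext h hz.2.symm

lemma q_zero_ker {H : Matrix (Fin 2 × Fin 2) (Fin 2 × Fin 2) ℂ} (hH : H.PosSemidef)
    {u : Fin 2 × Fin 2 → ℂ} (h : (star u ⬝ᵥ H *ᵥ u).re = 0) : H *ᵥ u = 0 :=
  (hH.dotProduct_mulVec_zero_iff u).1 (nonneg_re_zero (hH.dotProduct_mulVec_nonneg u) h)

def bv0 : Fin 2 → ℂ := ![1, 0]
def bv1 : Fin 2 → ℂ := ![0, 1]
def wt (t : ℝ) : Fin 2 → ℂ := ![(Real.sqrt t : ℂ), (Real.sqrt (1-t) : ℂ)]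
def vm : Fin 2 → ℂ := ![(Real.sqrt (1/2) : ℂ), -(Real.sqrt (1/2) : ℂ)]
def vi : Fin 2 → ℂ := ![(Real.sqrt (1/2) : ℂ), (Real.sqrt (1/2) : ℂ) * Complex.I]

lemma bv0_unit : star bv0 ⬝ᵥ bv0 = 1 := by
  simp [bv0, dotProduct, Fin.sum_univ_two]

lemma bv1_unit : star bv1 ⬝ᵥ bv1 = 1 := by
  simp [bv1, dotProduct, Fin.sum_univ_two]

lemma wt_unit {t : ℝ} (h0 : 0 ≤ t) (h1 : t ≤ 1) : star (wt t) ⬝ᵥ wt t = 1 := by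
  simp only [wt, dotProduct, Fin.sum_univ_two, Pi.star_apply, Matrix.cons_val_zero,
    Matrix.cons_val_one, Matrix.head_cons, RCLike.star_def, Complex.conj_ofReal]
  rw [← Complex.ofReal_mul, ← Complex.ofReal_mul, Real.mul_self_sqrt h0,
    Real.mul_self_sqrt (by linarith)]
  push_cast
  ring

lemma vm_unit : star vm ⬝ᵥ vm = 1 := by
  simp only [vm, dotProduct, Fin.sum_univ_two, Pi.star_apply, Matrix.cons_val_zero,
    Matrix.cons_val_one, Matrix.head_cons, RCLike.star_def, Complex.conj_ofReal, map_neg,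
    neg_mul, mul_neg, neg_neg]
  rw [← Complex.ofReal_mul, Real.mul_self_sqrt (by norm_num)]
  norm_num

lemma vi_unit : star vi ⬝ᵥ vi = 1 := by
  simp only [vi, dotProduct, Fin.sum_univ_two, Pi.star_apply, Matrix.cons_val_zero,
    Matrix.cons_val_one, Matrix.head_cons, RCLike.star_def, Complex.conj_ofReal, map_mul,
    Complex.conj_I]
  have : ((Real.sqrt (1/2) : ℂ)) * (Real.sqrt (1/2) : ℂ) = ((1:ℝ)/2 : ℝ) := by
    rw [← Complex.ofReal_mul, Real.mul_self_sqrt (by norm_num)]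
  rw [show (Real.sqrt (1/2) : ℂ) * (-Complex.I) * ((Real.sqrt (1/2) : ℂ) * Complex.I)
      = (Real.sqrt (1/2) : ℂ) * (Real.sqrt (1/2) : ℂ) * (Complex.I * Complex.I) * (-1) by ring,
    Complex.I_mul_I, this]
  norm_num

section QVals
variable (H : Matrix (Fin 2 × Fin 2) (Fin 2 × Fin 2) ℂ)

lemma qval00 : star (kv bv0 bv0) ⬝ᵥ H *ᵥ kv bv0 bv0 = H (0,0) (0,0) := by
  simp [kv, bv0, dotProduct, Matrix.mulVec, Fintype.sum_prod_type, Fin.sum_univ_two]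

lemma qval01 : star (kv bv0 bv1) ⬝ᵥ H *ᵥ kv bv0 bv1 = H (0,1) (0,1) := by
  simp [kv, bv0, bv1, dotProduct, Matrix.mulVec, Fintype.sum_prod_type, Fin.sum_univ_two]

lemma qval10 : star (kv bv1 bv0) ⬝ᵥ H *ᵥ kv bv1 bv0 = H (1,0) (1,0) := by
  simp [kv, bv0, bv1, dotProduct, Matrix.mulVec, Fintype.sum_prod_type, Fin.sum_univ_two]

lemma qval11 : star (kv bv1 bv1) ⬝ᵥ H *ᵥ kv bv1 bv1 = H (1,1) (1,1) := by
  simp [kv, bv1, dotProduct, Matrix.mulVec, Fintype.sum_prod_type, Fin.sum_univ_two]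

lemma qvalwt (t : ℝ) : star (kv bv0 (wt t)) ⬝ᵥ H *ᵥ kv bv0 (wt t)
    = (Real.sqrt t : ℂ) * (Real.sqrt t : ℂ) * H (0,0) (0,0)
      + (Real.sqrt t : ℂ) * (Real.sqrt (1-t) : ℂ) * H (0,0) (0,1)
      + (Real.sqrt (1-t) : ℂ) * (Real.sqrt t : ℂ) * H (0,1) (0,0)
      + (Real.sqrt (1-t) : ℂ) * (Real.sqrt (1-t) : ℂ) * H (0,1) (0,1) := by
  simp [kv, bv0, wt, dotProduct, Matrix.mulVec, Fintype.sum_prod_type,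
    Fin.sum_univ_two, Complex.conj_ofReal]
  ring

lemma qvalvm : star (kv bv0 vm) ⬝ᵥ H *ᵥ kv bv0 vm
    = (Real.sqrt (1/2) : ℂ) * (Real.sqrt (1/2) : ℂ)
      * (H (0,0) (0,0) - H (0,0) (0,1) - H (0,1) (0,0) + H (0,1) (0,1)) := by
  simp [kv, bv0, vm, dotProduct, Matrix.mulVec, Fintype.sum_prod_type,
    Fin.sum_univ_two, Complex.conj_ofReal]
  ring

end QVals

def using' : Fin 2 × Fin 2 → ℂ :=
  fun p => (Real.sqrt (1/2) : ℂ) * (kv bv0 bv1 p - kv bv1 bv0 p)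

lemma using'_unit : star using' ⬝ᵥ using' = 1 := by
  have hc : (Real.sqrt (1/2) : ℂ) * (Real.sqrt (1/2) : ℂ) = 1/2 := by
    rw [← Complex.ofReal_mul, Real.mul_self_sqrt (by norm_num)]; norm_num
  simp only [using', kv, bv0, bv1, dotProduct, Fintype.sum_prod_type, Fin.sum_univ_two,
    Pi.star_apply, Matrix.cons_val_zero, Matrix.cons_val_one, Matrix.head_cons,
    star_mul', star_sub, RCLike.star_def, Complex.conj_ofReal, map_mul, map_one, map_zero]
  linear_combination (2:ℂ) * hc

section QVals2
variable (H : Matrix (Fin 2 × Fin 2) (Fin 2 × Fin 2) ℂ)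

lemma qvalu' : star using' ⬝ᵥ H *ᵥ using'
    = (Real.sqrt (1/2) : ℂ) * (Real.sqrt (1/2) : ℂ)
      * (H (0,1) (0,1) - H (0,1) (1,0) - H (1,0) (0,1) + H (1,0) (1,0)) := by
  simp only [using', kv, bv0, bv1, dotProduct, Matrix.mulVec, Fintype.sum_prod_type,
    Fin.sum_univ_two, Pi.star_apply, Matrix.cons_val_zero, Matrix.cons_val_one,
    Matrix.head_cons, star_mul', star_sub, RCLike.star_def, Complex.conj_ofReal,
    map_mul, map_one, map_zero]
  ring

lemma qvalvp (hE1 : ∀ p, H p (0,1) = 0) (hE2 : ∀ p, H p (1,0) = 0)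
    (hR1 : ∀ q, H (0,1) q = 0) (hR2 : ∀ q, H (1,0) q = 0) :
    star (kv (wt (1/2)) (wt (1/2))) ⬝ᵥ H *ᵥ kv (wt (1/2)) (wt (1/2))
      = (1/4 : ℂ) * (H (0,0) (0,0) + H (0,0) (1,1) + H (1,1) (0,0) + H (1,1) (1,1)) := by
  have hc : (Real.sqrt (1/2) : ℂ) * (Real.sqrt (1/2) : ℂ) = 1/2 := by
    rw [← Complex.ofReal_mul, Real.mul_self_sqrt (by norm_num)]; norm_num
  simp only [kv, wt, show (1:ℝ) - 1/2 = 1/2 by norm_num, dotProduct, Matrix.mulVec,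
    Fintype.sum_prod_type, Fin.sum_univ_two, Pi.star_apply, Matrix.cons_val_zero,
    Matrix.cons_val_one, Matrix.head_cons, star_mul', RCLike.star_def, Complex.conj_ofReal,
    hE1, hE2, hR1, hR2, mul_zero, zero_mul, add_zero, zero_add]
  linear_combination (((Real.sqrt (1/2) : ℂ) * (Real.sqrt (1/2) : ℂ) + 1/2)
    * (H (0,0) (0,0) + H (0,0) (1,1) + H (1,1) (0,0) + H (1,1) (1,1))) * hc

lemma qvalvi (hE1 : ∀ p, H p (0,1) = 0) (hE2 : ∀ p, H p (1,0) = 0)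
    (hR1 : ∀ q, H (0,1) q = 0) (hR2 : ∀ q, H (1,0) q = 0) :
    star (kv vi vi) ⬝ᵥ H *ᵥ kv vi vi
      = (1/4 : ℂ) * (H (0,0) (0,0) - H (0,0) (1,1) - H (1,1) (0,0) + H (1,1) (1,1)) := by
  have hc : (Real.sqrt (1/2) : ℂ) * (Real.sqrt (1/2) : ℂ) = 1/2 := by
    rw [← Complex.ofReal_mul, Real.mul_self_sqrt (by norm_num)]; norm_num
  simp only [kv, vi, dotProduct, Matrix.mulVec, Fintype.sum_prod_type,
    Fin.sum_univ_two, Pi.star_apply, Matrix.cons_val_zero, Matrix.cons_val_one,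
    Matrix.head_cons, star_mul', RCLike.star_def, Complex.conj_ofReal, map_mul,
    Complex.conj_I, hE1, hE2, hR1, hR2, mul_zero, zero_mul, add_zero, zero_add]
  ring_nf
  simp only [Complex.I_sq, Complex.I_pow_four]
  linear_combination (((Real.sqrt (1/2) : ℂ) * (Real.sqrt (1/2) : ℂ) + 1/2)
    * (H (0,0) (0,0) - H (0,0) (1,1) - H (1,1) (0,0) + H (1,1) (1,1))) * hc

end QVals2

open scoped Matrix.Norms.L2Operator in
/-- No-go quantum Kantorovich–Rubinstein theorem. -/
theorem stmt8 :
    ¬ ∃ (H : Matrix (Fin 2 × Fin 2) (Fin 2 × Fin 2) ℂ) (f : ℝ → ℝ),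
      H.PosSemidef ∧
      Set.BijOn f (Set.Icc (0 : ℝ) ‖H‖) (Set.Icc (0 : ℝ) 1) ∧
      ∀ ρ1 ρ2 : Matrix (Fin 2) (Fin 2) ℂ, IsDensity ρ1 → IsDensity ρ2 →
        traceDist ρ1 ρ2 = f (sInf {x : ℝ | ∃ ρ12 : Matrix ((Fin 2) × (Fin 2))
            ((Fin 2) × (Fin 2)) ℂ,
          IsCoupling ρ12 ρ1 ρ2 ∧ x = ((H * ρ12).trace).re}) := by
  
  rintro ⟨H, f, hH, hf, heq⟩
  have hrel : ∀ (v w : Fin 2 → ℂ), star v ⬝ᵥ v = 1 → star w ⬝ᵥ w = 1 →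
      Real.sqrt (Complex.normSq (v 0 * w 1 - v 1 * w 0))
        = f ((star (kv v w) ⬝ᵥ H *ᵥ kv v w).re) := by
    intro v w hv hw
    have hd := heq (proj v) (proj w) ⟨proj_posSemidef v, by rw [proj_trace, hv]⟩
      ⟨proj_posSemidef w, by rw [proj_trace, hw]⟩
    rwa [sInf_coupling H hv hw, traceDist_proj hv hw] at hd
  have hmem : ∀ u : Fin 2 × Fin 2 → ℂ, star u ⬝ᵥ u = 1 →
      (star u ⬝ᵥ H *ᵥ u).re ∈ Set.Icc (0:ℝ) ‖H‖ := fun u hu =>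
    ⟨q_nonneg hH u, q_le_norm H hu⟩
  have hinj := hf.2.1
  have hmap := hf.1
  have hre : ∀ p q : Fin 2 × Fin 2, (H p q).re = (H q p).re := by
    intro p q
    rw [← hH.1.apply p q]
    simp
  have hcR : Real.sqrt (1/2) * Real.sqrt (1/2) = 1/2 := Real.mul_self_sqrt (by norm_num)
  have hcC : (Real.sqrt (1/2) : ℂ) * (Real.sqrt (1/2) : ℂ) = 1/2 := by
    rw [← Complex.ofReal_mul, hcR]; norm_num
  have hvpunit : star (wt (1/2)) ⬝ᵥ wt (1/2) = 1 := wt_unit (by norm_num) (by norm_num)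
  -- q-value of the wt family
  have hqwt : ∀ t : ℝ,
      (star (kv bv0 (wt t)) ⬝ᵥ H *ᵥ kv bv0 (wt t)).re
        = Real.sqrt t * Real.sqrt t * (H (0,0) (0,0)).re
          + Real.sqrt (1-t) * Real.sqrt (1-t) * (H (0,1) (0,1)).re
          + Real.sqrt t * Real.sqrt (1-t)
            * ((H (0,0) (0,1)).re + (H (0,1) (0,0)).re) := by
    intro t
    rw [qvalwt H t]
    simp only [Complex.add_re, ← Complex.ofReal_mul, Complex.re_ofReal_mul]
    ring
  -- eliminate the cross term using (bv0, vm) vs (bv0, wt (1/2))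
  have hS : (H (0,0) (0,1)).re + (H (0,1) (0,0)).re = 0 := by
    have e1 := hrel bv0 vm bv0_unit vm_unit
    have e2 := hrel bv0 (wt (1/2)) bv0_unit hvpunit
    have hd1 : Real.sqrt (Complex.normSq (bv0 0 * vm 1 - bv0 1 * vm 0))
        = Real.sqrt (1/2) := by
      rw [show bv0 0 * vm 1 - bv0 1 * vm 0 = -(Real.sqrt (1/2) : ℂ) by simp [bv0, vm],
        Complex.normSq_neg, Complex.normSq_ofReal, hcR]
    have hd2 : Real.sqrt (Complex.normSq (bv0 0 * wt (1/2) 1 - bv0 1 * wt (1/2) 0))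
        = Real.sqrt (1/2) := by
      rw [show bv0 0 * wt (1/2) 1 - bv0 1 * wt (1/2) 0 = (Real.sqrt (1/2) : ℂ) by
          simp [bv0, wt]; norm_num,
        Complex.normSq_ofReal, hcR]
    rw [hd1] at e1
    rw [hd2] at e2
    have heqq := hinj (hmem _ (kv_unit bv0_unit vm_unit))
      (hmem _ (kv_unit bv0_unit hvpunit)) (by rw [← e1, ← e2])
    have hv1 : (star (kv bv0 vm) ⬝ᵥ H *ᵥ kv bv0 vm).re
        = 1/2 * ((H (0,0) (0,0)).re - (H (0,0) (0,1)).re - (H (0,1) (0,0)).re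
          + (H (0,1) (0,1)).re) := by
      rw [qvalvm H, hcC]
      simp only [Complex.mul_re, Complex.add_re, Complex.sub_re, Complex.add_im,
        Complex.sub_im]
      norm_num
    have hv2 := hqwt (1/2)
    rw [show (1:ℝ) - 1/2 = 1/2 by norm_num, hcR] at hv2
    rw [hv1, hv2] at heqq
    linarith
  -- the affine family and f
  have hfa : ∀ t : ℝ, 0 ≤ t → t ≤ 1 →
      Real.sqrt (1-t) = f (t * (H (0,0) (0,0)).re + (1-t) * (H (0,1) (0,1)).re) := by
    intro t h0 h1
    have h := hrel bv0 (wt t) bv0_unit (wt_unit h0 h1)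
    have hδ : Real.sqrt (Complex.normSq (bv0 0 * wt t 1 - bv0 1 * wt t 0))
        = Real.sqrt (1-t) := by
      simp [bv0, wt, Complex.normSq_ofReal,
        Real.mul_self_sqrt (by linarith : (0:ℝ) ≤ 1 - t)]
    rw [hδ] at h
    rw [hqwt t, hS, mul_zero, add_zero, Real.mul_self_sqrt h0,
      Real.mul_self_sqrt (by linarith : (0:ℝ) ≤ 1 - t)] at h
    exact h
  have hamem : ∀ t : ℝ, 0 ≤ t → t ≤ 1 →
      t * (H (0,0) (0,0)).re + (1-t) * (H (0,1) (0,1)).re ∈ Set.Icc (0:ℝ) ‖H‖ := by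
    intro t h0 h1
    have := hmem _ (kv_unit bv0_unit (wt_unit h0 h1))
    rwa [hqwt t, hS, mul_zero, add_zero, Real.mul_self_sqrt h0,
      Real.mul_self_sqrt (by linarith : (0:ℝ) ≤ 1 - t)] at this
  have hb0mem : (H (0,0) (0,0)).re ∈ Set.Icc (0:ℝ) ‖H‖ := by
    have := hamem 1 (by norm_num) (by norm_num)
    simpa using this
  have hb1mem : (H (0,1) (0,1)).re ∈ Set.Icc (0:ℝ) ‖H‖ := by
    have := hamem 0 (by norm_num) (by norm_num)
    simpa using this
  have hf1 : f ((H (0,1) (0,1)).re) = 1 := by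
    have := hfa 0 (by norm_num) (by norm_num)
    simpa using this.symm
  have hf0b : f ((H (0,0) (0,0)).re) = 0 := by
    have := hfa 1 (by norm_num) (by norm_num)
    simpa using this.symm
  have h0mem : (0:ℝ) ∈ Set.Icc (0:ℝ) ‖H‖ := ⟨le_refl 0, norm_nonneg H⟩
  have hlmem : ‖H‖ ∈ Set.Icc (0:ℝ) ‖H‖ := ⟨norm_nonneg H, le_refl _⟩
  have hf0I := hmap h0mem
  have hflI := hmap hlmem
  -- a t0 = 0
  have ha0 : (1 - (f 0)^2) * (H (0,0) (0,0)).re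
      + (f 0)^2 * (H (0,1) (0,1)).re = 0 := by
    have h0' : 0 ≤ 1 - (f 0)^2 := by nlinarith [hf0I.1, hf0I.2]
    have h1' : 1 - (f 0)^2 ≤ 1 := by nlinarith [hf0I.1]
    have h := hfa _ h0' h1'
    have hm := hamem _ h0' h1'
    rw [show (1:ℝ) - (1 - (f 0)^2) = (f 0)^2 by ring] at h hm
    rw [Real.sqrt_sq hf0I.1] at h
    exact hinj hm h0mem h.symm
  -- a t1 = ‖H‖
  have hal : (1 - (f ‖H‖)^2) * (H (0,0) (0,0)).re
      + (f ‖H‖)^2 * (H (0,1) (0,1)).re = ‖H‖ := by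
    have h0' : 0 ≤ 1 - (f ‖H‖)^2 := by nlinarith [hflI.1, hflI.2]
    have h1' : 1 - (f ‖H‖)^2 ≤ 1 := by nlinarith [hflI.1]
    have h := hfa _ h0' h1'
    have hm := hamem _ h0' h1'
    rw [show (1:ℝ) - (1 - (f ‖H‖)^2) = (f ‖H‖)^2 by ring] at h hm
    rw [Real.sqrt_sq hflI.1] at h
    exact hinj hm hlmem h.symm
  -- split
  have hsplit : (H (0,0) (0,0)).re = 0 ∨ (H (0,1) (0,1)).re = 0 := by
    have h0' : 0 ≤ 1 - (f 0)^2 := by nlinarith [hf0I.1, hf0I.2]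
    have hx : (1 - (f 0)^2) * (H (0,0) (0,0)).re = 0 ∧
        (f 0)^2 * (H (0,1) (0,1)).re = 0 := by
      constructor <;>
        nlinarith [mul_nonneg h0' hb0mem.1,
          mul_nonneg (sq_nonneg (f 0)) hb1mem.1]
    rcases mul_eq_zero.1 hx.1 with h | h
    · right
      have h2 : (f 0)^2 = 1 := by nlinarith
      rw [h2, one_mul] at hx
      exact hx.2
    · exact Or.inl h
  -- common facts
  have hd10 : (1:ℝ) = f ((H (1,0) (1,0)).re) := by
    have h := hrel bv1 bv0 bv1_unit bv0_unit
    rw [show bv1 0 * bv0 1 - bv1 1 * bv0 0 = -1 by simp [bv0, bv1], qval10 H] at h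
    simpa using h
  have hd11 : (0:ℝ) = f ((H (1,1) (1,1)).re) := by
    have h := hrel bv1 bv1 bv1_unit bv1_unit
    rw [show bv1 0 * bv1 1 - bv1 1 * bv1 0 = 0 by ring, qval11 H] at h
    simpa using h
  rcases hsplit with hb0z | hb1z
  -- CASE A : ⟨00|H|00⟩ = 0
  · have hs1 : (f ‖H‖)^2 ≤ 1 := by nlinarith [hflI.1, hflI.2]
    have hb1lam : (H (0,1) (0,1)).re = ‖H‖ := by
      nlinarith [hal, hb0z, hb1mem.1, hb1mem.2, hs1, sq_nonneg (f ‖H‖)]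
    have hf0v : f 0 = 0 := by rw [hb0z] at hf0b; exact hf0b
    have hflam1 : f ‖H‖ = 1 := by rw [hb1lam] at hf1; exact hf1
    have hlampos : 0 < ‖H‖ := by
      rcases lt_or_eq_of_le (norm_nonneg H) with h | h
      · exact h
      · exfalso; rw [← h, hf0v] at hflam1; norm_num at hflam1
    have hk00 : H *ᵥ kv bv0 bv0 = 0 := q_zero_ker hH (by rw [qval00 H]; exact hb0z)
    have h11z : (H (1,1) (1,1)).re = 0 := by
      refine hinj ?_ h0mem ?_
      · have := hmem _ (kv_unit bv1_unit bv1_unit)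
        rwa [qval11 H] at this
      · rw [← hd11, hf0v]
    have hk11 : H *ᵥ kv bv1 bv1 = 0 := q_zero_ker hH (by rw [qval11 H]; exact h11z)
    have hdvp : (0:ℝ) = f ((star (kv (wt (1/2)) (wt (1/2)))
        ⬝ᵥ H *ᵥ kv (wt (1/2)) (wt (1/2))).re) := by
      have h := hrel (wt (1/2)) (wt (1/2)) hvpunit hvpunit
      rw [show wt (1/2) 0 * wt (1/2) 1 - wt (1/2) 1 * wt (1/2) 0 = 0 by ring] at h
      simpa using h
    have hvpz : (star (kv (wt (1/2)) (wt (1/2)))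
        ⬝ᵥ H *ᵥ kv (wt (1/2)) (wt (1/2))).re = 0 :=
      hinj (hmem _ (kv_unit hvpunit hvpunit)) h0mem (by rw [← hdvp, hf0v])
    have hkvp : H *ᵥ kv (wt (1/2)) (wt (1/2)) = 0 := q_zero_ker hH hvpz
    have hdec : kv bv0 bv1 + kv bv1 bv0
        = (2:ℂ) • kv (wt (1/2)) (wt (1/2)) - kv bv0 bv0 - kv bv1 bv1 := by
      funext p
      rcases p with ⟨i, j⟩
      fin_cases i <;> fin_cases j <;>
        simp only [kv, bv0, bv1, wt, Pi.add_apply, Pi.sub_apply, Pi.smul_apply, smul_eq_mul,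
          Matrix.cons_val_zero, Matrix.cons_val_one, Matrix.head_cons,
          Fin.mk_zero, Fin.mk_one,
          show (1:ℝ) - 1/2 = 1/2 by norm_num] <;>
        first
          | linear_combination (2:ℂ) * hcC
          | linear_combination (-2:ℂ) * hcC
    have hks : H *ᵥ (kv bv0 bv1 + kv bv1 bv0) = 0 := by
      rw [hdec, Matrix.mulVec_sub, Matrix.mulVec_sub, Matrix.mulVec_smul, hkvp, hk00, hk11]
      simp
    have hent : ∀ p, H p (1,0) = - H p (0,1) := by
      intro p
      have h := congr_fun hks p
      have h2 : H p (0,1) + H p (1,0) = 0 := by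
        simpa [Matrix.mulVec, dotProduct, kv, bv0, bv1, Fintype.sum_prod_type,
          Fin.sum_univ_two] using h
      linear_combination h2
    have h10lam : (H (1,0) (1,0)).re = ‖H‖ := by
      refine hinj ?_ hlmem ?_
      · have := hmem _ (kv_unit bv1_unit bv0_unit)
        rwa [qval10 H] at this
      · rw [← hd10, hflam1]
    have h1001 : (H (1,0) (0,1)).re = -‖H‖ := by
      rw [hre (1,0) (0,1), hent (0,1), Complex.neg_re, hb1lam]
    have hqu2 : (star using' ⬝ᵥ H *ᵥ using').re = 2 * ‖H‖ := by
      have e := qvalu' H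
      rw [hent (0,1), hent (1,0)] at e
      rw [e, ← Complex.ofReal_mul, Complex.re_ofReal_mul, hcR]
      simp only [Complex.sub_re, Complex.add_re, Complex.neg_re]
      rw [hb1lam, h1001]
      ring
    have hle := (hmem using' using'_unit).2
    rw [hqu2] at hle
    linarith
  -- CASE B : ⟨01|H|01⟩ = 0
  · have hs1 : (f ‖H‖)^2 ≤ 1 := by nlinarith [hflI.1, hflI.2]
    have hb0lam : (H (0,0) (0,0)).re = ‖H‖ := by
      nlinarith [hal, hb1z, hb0mem.1, hb0mem.2, hs1, sq_nonneg (f ‖H‖)]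
    have hf0v : f 0 = 1 := by rw [hb1z] at hf1; exact hf1
    have hflam : f ‖H‖ = 0 := by rw [hb0lam] at hf0b; exact hf0b
    have hlampos : 0 < ‖H‖ := by
      rcases lt_or_eq_of_le (norm_nonneg H) with h | h
      · exact h
      · exfalso; rw [← h, hf0v] at hflam; norm_num at hflam
    have hk01 : H *ᵥ kv bv0 bv1 = 0 := q_zero_ker hH (by rw [qval01 H]; exact hb1z)
    have h10z : (H (1,0) (1,0)).re = 0 := by
      refine hinj ?_ h0mem ?_
      · have := hmem _ (kv_unit bv1_unit bv0_unit)
        rwa [qval10 H] at this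
      · rw [← hd10, hf0v]
    have hk10 : H *ᵥ kv bv1 bv0 = 0 := q_zero_ker hH (by rw [qval10 H]; exact h10z)
    have hE1 : ∀ p, H p (0,1) = 0 := by
      intro p
      have h := congr_fun hk01 p
      simpa [Matrix.mulVec, dotProduct, kv, bv0, bv1, Fintype.sum_prod_type,
        Fin.sum_univ_two] using h
    have hE2 : ∀ p, H p (1,0) = 0 := by
      intro p
      have h := congr_fun hk10 p
      simpa [Matrix.mulVec, dotProduct, kv, bv0, bv1, Fintype.sum_prod_type,
        Fin.sum_univ_two] using h
    have hR1 : ∀ q, H (0,1) q = 0 := fun q => by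
      rw [← hH.1.apply (0,1) q, hE1 q, star_zero]
    have hR2 : ∀ q, H (1,0) q = 0 := fun q => by
      rw [← hH.1.apply (1,0) q, hE2 q, star_zero]
    have h11lam : (H (1,1) (1,1)).re = ‖H‖ := by
      refine hinj ?_ hlmem ?_
      · have := hmem _ (kv_unit bv1_unit bv1_unit)
        rwa [qval11 H] at this
      · rw [← hd11, hflam]
    have hdvp : (0:ℝ) = f ((star (kv (wt (1/2)) (wt (1/2)))
        ⬝ᵥ H *ᵥ kv (wt (1/2)) (wt (1/2))).re) := by
      have h := hrel (wt (1/2)) (wt (1/2)) hvpunit hvpunit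
      rw [show wt (1/2) 0 * wt (1/2) 1 - wt (1/2) 1 * wt (1/2) 0 = 0 by ring] at h
      simpa using h
    have hvplam : (star (kv (wt (1/2)) (wt (1/2)))
        ⬝ᵥ H *ᵥ kv (wt (1/2)) (wt (1/2))).re = ‖H‖ :=
      hinj (hmem _ (kv_unit hvpunit hvpunit)) hlmem (by rw [← hdvp, hflam])
    have hzr : (H (0,0) (1,1)).re = ‖H‖ := by
      have e := qvalvp H hE1 hE2 hR1 hR2
      rw [e, show (1/4:ℂ) = ((1/4:ℝ):ℂ) by norm_num, Complex.re_ofReal_mul] at hvplam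
      simp only [Complex.add_re] at hvplam
      have hsym := hre (1,1) (0,0)
      linarith [hvplam, hb0lam, h11lam]
    have hdvi : (0:ℝ) = f ((star (kv vi vi) ⬝ᵥ H *ᵥ kv vi vi).re) := by
      have h := hrel vi vi vi_unit vi_unit
      rw [show vi 0 * vi 1 - vi 1 * vi 0 = 0 by ring] at h
      simpa using h
    have hvilam : (star (kv vi vi) ⬝ᵥ H *ᵥ kv vi vi).re = ‖H‖ :=
      hinj (hmem _ (kv_unit vi_unit vi_unit)) hlmem (by rw [← hdvi, hflam])
    have e := qvalvi H hE1 hE2 hR1 hR2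
    rw [e, show (1/4:ℂ) = ((1/4:ℝ):ℂ) by norm_num, Complex.re_ofReal_mul] at hvilam
    simp only [Complex.add_re, Complex.sub_re] at hvilam
    have hsym := hre (1,1) (0,0)
    linarith [hvilam, hb0lam, h11lam, hzr, hlampos]
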